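/- Let A = (a_ij) be an N×N real matrix with nonnegative entries and zero diagonal such that the directed graph G[A] is strongly connected, and let α_1,…,α_N ≥ 0 satisfy d_i^+[A] · α_i < 1/2 for every i, where d_i^+[A] = Σ_j a_ij. Let y_1,…,y_N : [0,∞) → ℝ^m be continuous functions, define u_i(t) = Σ_{j=1}^N a_ij (y_j(t) − y_i(t)), and suppose there exist nonnegative functions V_1,…,V_N : [0,∞) → ℝ (storage functions evaluated along the trajectories) such that V_i(T) − V_i(0) ≤ ∫_0^T (⟨y_i(t), u_i(t)⟩ + α_i |u_i(t)|²) dt for all T ≥ 0 and all i. Then the outputs are L²-synchronized: ∫_0^∞ |y_j(t) − y_i(t)|² dt < ∞ for all i, j. -/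

import Mathlib

open RealInnerProductSpace MeasureTheory Finset Matrix

lemma exists_perron (N : ℕ) (hN : 0 < N) (A : Fin N → Fin N → ℝ)
    (hA_nonneg : ∀ i j, 0 ≤ A i j) (hA_diag : ∀ i, A i i = 0)
    (hconn : ∀ i j : Fin N, i ≠ j → Relation.TransGen (fun a b => 0 < A a b) i j) :
    ∃ w : Fin N → ℝ, (∀ i, 0 < w i) ∧ ∀ j, ∑ i, w i * A i j = w j * ∑ k, A j k := by
  haveI : NeZero N := ⟨hN.ne'⟩
  set d : Fin N → ℝ := fun i => ∑ k, A i k with hd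
  set L : Matrix (Fin N) (Fin N) ℝ :=
    Matrix.of fun i j => (if i = j then d i else 0) - A i j with hL
  -- constant vector is in the kernel of L
  have hker : L *ᵥ (fun _ => (1:ℝ)) = 0 := by
    funext i
    simp only [Matrix.mulVec, dotProduct, hL, Matrix.of_apply, mul_one, Pi.zero_apply]
    rw [Finset.sum_sub_distrib]
    simp [hd]
  have hdet : L.det = 0 := by
    rw [← Matrix.exists_mulVec_eq_zero_iff]
    exact ⟨_, Function.ne_iff.mpr ⟨⟨0, hN⟩, one_ne_zero⟩, hker⟩
  have hdetT : L.transpose.det = 0 := by rwa [Matrix.det_transpose]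
  obtain ⟨w, hw0, hw⟩ := (Matrix.exists_mulVec_eq_zero_iff).mpr hdetT
  -- componentwise: ∑ i, L i j * w i = 0
  have hwc : ∀ j, ∑ i, ((if i = j then d i else 0) - A i j) * w i = 0 := by
    intro j
    have := congrFun hw j
    simpa [Matrix.mulVec, dotProduct, Matrix.transpose_apply, hL,
      mul_comm] using this
  -- the absolute value vector
  set v : Fin N → ℝ := fun i => |w i| with hv
  set c : ℝ := (Finset.univ.sup' (univ_nonempty) d) + 1 with hc
  have hcpos : (0:ℝ) < c := by
    have h0 : (0:ℝ) ≤ d ⟨0, hN⟩ := Finset.sum_nonneg fun k _ => hA_nonneg _ k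
    have := Finset.le_sup' d (mem_univ (⟨0, hN⟩ : Fin N))
    rw [hc]; linarith
  have hcd : ∀ i, d i < c := fun i =>
    lt_of_le_of_lt (Finset.le_sup' d (mem_univ i)) (lt_add_one _)
  set M : Fin N → Fin N → ℝ :=
    fun i j => (if i = j then c - d i else 0) + A i j with hM
  have hM_nonneg : ∀ i j, 0 ≤ M i j := by
    intro i j
    by_cases h : i = j <;>
      simp [hM, h, hA_nonneg i j, (hcd i).le, sub_nonneg, add_nonneg, sub_pos,
        le_of_lt (hcd j)]
    · exact add_nonneg (by linarith [hcd j]) (hA_nonneg j j)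
  have hMrow : ∀ i, ∑ j, M i j = c := by
    intro i
    simp [hM, Finset.sum_add_distrib, ← hd]
    simp [hd]
  have hMw : ∀ j, ∑ i, M i j * w i = c * w j := by
    intro j
    have := hwc j
    have expand : ∀ i, M i j * w i = (if i = j then c else 0) * w i
        - ((if i = j then d i else 0) - A i j) * w i := by
      intro i; by_cases h : i = j <;> simp [hM, h] <;> ring
    rw [Finset.sum_congr rfl (fun i _ => expand i), Finset.sum_sub_distrib, hwc j]
    simp
  -- v is also a left eigenvector
  have hMv : ∀ j, ∑ i, M i j * v i = c * v j := by
    have hle : ∀ j, c * v j ≤ ∑ i, M i j * v i := by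
      intro j
      calc c * v j = |c * w j| := by
            rw [abs_mul, abs_of_pos hcpos]
      _ = |∑ i, M i j * w i| := by rw [hMw j]
      _ ≤ ∑ i, |M i j * w i| := Finset.abs_sum_le_sum_abs _ _
      _ = ∑ i, M i j * v i := by
            refine Finset.sum_congr rfl fun i _ => ?_
            rw [abs_mul, abs_of_nonneg (hM_nonneg i j)]
    have hsum : ∑ j, (∑ i, M i j * v i - c * v j) = 0 := by
      rw [Finset.sum_sub_distrib, Finset.sum_comm]
      have : ∀ i, ∑ j, M i j * v i = c * v i := by
        intro i; rw [← Finset.sum_mul, hMrow]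
      rw [Finset.sum_congr rfl fun i _ => this i]
      simp [mul_comm]
    intro j
    have := (Finset.sum_eq_zero_iff_of_nonneg
      (fun j _ => sub_nonneg.mpr (hle j))).mp hsum j (mem_univ j)
    linarith
  -- v is a left kernel vector of L
  have hvA : ∀ j, ∑ i, v i * A i j = v j * d j := by
    intro j
    have := hMv j
    have expand : ∀ i, M i j * v i = (if i = j then (c - d i) * v i else 0) + A i j * v i := by
      intro i; by_cases h : i = j <;> simp [hM, h] <;> ring
    rw [Finset.sum_congr rfl (fun i _ => expand i), Finset.sum_add_distrib] at this
    simp only [Finset.sum_ite_eq', mem_univ, if_true] at this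
    have : ∑ i, A i j * v i = d j * v j := by linarith
    rw [Finset.sum_congr rfl fun i _ => mul_comm (v i) (A i j), this, mul_comm]
  -- positivity: the zero set of v is closed under predecessors
  have hpred : ∀ i j, 0 < A i j → v j = 0 → v i = 0 := by
    intro i j hij hvj
    have hsum0 : ∑ k, M k j * v k = 0 := by rw [hMv j, hvj, mul_zero]
    have hterm := (Finset.sum_eq_zero_iff_of_nonneg
      (fun k _ => mul_nonneg (hM_nonneg k j) (abs_nonneg _))).mp hsum0 i (mem_univ i)
    have hMij : 0 < M i j := by
      by_cases h : i = j
      · subst h; exact absurd hij (by simp [hA_diag])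
      · simpa [hM, h] using hij
    have := mul_eq_zero.mp hterm
    rcases this with h | h
    · exact absurd h hMij.ne'
    · exact h
  -- v is strictly positive
  have hvpos : ∀ i, 0 < v i := by
    by_contra h
    push_neg at h
    obtain ⟨j, hj⟩ := h
    have hvj : v j = 0 := le_antisymm hj (abs_nonneg _)
    have key : ∀ a, Relation.TransGen (fun a b => 0 < A a b) a j → v a = 0 := by
      intro a hpath
      induction hpath using Relation.TransGen.head_induction_on with
      | single h => exact hpred _ _ h hvj
      | head h _ ih2 => exact hpred _ _ h ih2
    have hallzero : ∀ k, v k = 0 := by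
      intro k
      by_cases hkj : k = j
      · rwa [hkj]
      · exact key k (hconn k j hkj)
    exact hw0 (funext fun i => abs_eq_zero.mp (hallzero i))
  exact ⟨v, hvpos, fun j => by rw [hvA j, hd]⟩



-- pointwise algebra lemma at a fixed time, in an abstract inner product space
lemma pointwise_bound {N : ℕ} {E : Type*} [NormedAddCommGroup E] [InnerProductSpace ℝ E]
    (A : Fin N → Fin N → ℝ) (hA_nonneg : ∀ i j, 0 ≤ A i j)
    (α w : Fin N → ℝ) (hα_nonneg : ∀ i, 0 ≤ α i) (hw_pos : ∀ i, 0 < w i)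
    (hw : ∀ j, ∑ i, w i * A i j = w j * ∑ k, A j k)
    (ε : ℝ) (hε : ∀ i, ε ≤ 1/2 - (∑ j, A i j) * α i)
    (Y : Fin N → E) :
    ∑ i, w i * (⟪Y i, ∑ j, A i j • (Y j - Y i)⟫ + α i * ‖∑ j, A i j • (Y j - Y i)‖ ^ 2)
      ≤ -ε * ∑ i, w i * ∑ j, A i j * ‖Y j - Y i‖ ^ 2 := by
  set d : Fin N → ℝ := fun i => ∑ j, A i j with hd
  set Q : Fin N → ℝ := fun i => ∑ j, A i j * ‖Y j - Y i‖ ^ 2 with hQ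
  have hQ_nonneg : ∀ i, 0 ≤ Q i :=
    fun i => Finset.sum_nonneg fun j _ => mul_nonneg (hA_nonneg i j) (sq_nonneg _)
  have hd_nonneg : ∀ i, 0 ≤ d i := fun i => Finset.sum_nonneg fun j _ => hA_nonneg i j
  -- inner product expansion
  have hinner : ∀ i, ⟪Y i, ∑ j, A i j • (Y j - Y i)⟫
      = (∑ j, A i j * (‖Y j‖ ^ 2 - ‖Y i‖ ^ 2)) / 2 - Q i / 2 := by
    intro i
    rw [inner_sum]
    have : ∀ j, ⟪Y i, A i j • (Y j - Y i)⟫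
        = A i j * ((‖Y j‖ ^ 2 - ‖Y i‖ ^ 2) / 2 - ‖Y j - Y i‖ ^ 2 / 2) := by
      intro j
      rw [real_inner_smul_right, inner_sub_right, real_inner_self_eq_norm_sq]
      have hns := norm_sub_sq_real (Y j) (Y i)
      have hc : ⟪Y i, Y j⟫ = ⟪Y j, Y i⟫ := real_inner_comm _ _
      linear_combination (A i j) * hc + (A i j / 2) * hns
    rw [Finset.sum_congr rfl fun j _ => this j]
    simp only [hQ]
    rw [Finset.sum_div, Finset.sum_div, ← Finset.sum_sub_distrib]
    refine Finset.sum_congr rfl fun j _ => by ring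
  -- Cauchy-Schwarz bound on the input
  have hCS : ∀ i, ‖∑ j, A i j • (Y j - Y i)‖ ^ 2 ≤ d i * Q i := by
    intro i
    have h1 : ‖∑ j, A i j • (Y j - Y i)‖ ≤ ∑ j, A i j * ‖Y j - Y i‖ := by
      refine (norm_sum_le _ _).trans_eq ?_
      refine Finset.sum_congr rfl fun j _ => ?_
      rw [norm_smul, Real.norm_eq_abs, abs_of_nonneg (hA_nonneg i j)]
    have h2 : ‖∑ j, A i j • (Y j - Y i)‖ ^ 2 ≤ (∑ j, A i j * ‖Y j - Y i‖) ^ 2 := by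
      have := norm_nonneg (∑ j, A i j • (Y j - Y i))
      nlinarith
    refine h2.trans ?_
    exact Finset.sum_sq_le_sum_mul_sum_of_sq_eq_mul _
      (fun j _ => hA_nonneg i j)
      (fun j _ => mul_nonneg (hA_nonneg i j) (sq_nonneg _))
      (fun j _ => by rw [mul_pow]; ring)
  -- the balance term vanishes
  have hbal : ∑ i, w i * ((∑ j, A i j * (‖Y j‖ ^ 2 - ‖Y i‖ ^ 2)) / 2) = 0 := by
    have h1 : ∑ i, w i * ((∑ j, A i j * (‖Y j‖ ^ 2 - ‖Y i‖ ^ 2)) / 2)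
        = ((∑ i, ∑ j, w i * A i j * ‖Y j‖ ^ 2) - ∑ i, w i * d i * ‖Y i‖ ^ 2) / 2 := by
      rw [← Finset.sum_sub_distrib, Finset.sum_div]
      refine Finset.sum_congr rfl fun i _ => ?_
      have key : w i * ∑ j, A i j * (‖Y j‖ ^ 2 - ‖Y i‖ ^ 2)
          = ∑ j, w i * A i j * ‖Y j‖ ^ 2 - w i * d i * ‖Y i‖ ^ 2 := by
        simp only [hd, Finset.mul_sum, Finset.sum_mul, ← Finset.sum_sub_distrib]
        exact Finset.sum_congr rfl fun j _ => by ring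
      rw [mul_div_assoc', key]
    rw [h1]
    have h2 : ∑ i, ∑ j, w i * A i j * ‖Y j‖ ^ 2 = ∑ j, w j * d j * ‖Y j‖ ^ 2 := by
      rw [Finset.sum_comm]
      refine Finset.sum_congr rfl fun j _ => ?_
      rw [← Finset.sum_mul, hw j]
    rw [h2, sub_self, zero_div]
  -- combine
  have hmain : ∀ i, w i * (⟪Y i, ∑ j, A i j • (Y j - Y i)⟫
        + α i * ‖∑ j, A i j • (Y j - Y i)‖ ^ 2)
      ≤ w i * ((∑ j, A i j * (‖Y j‖ ^ 2 - ‖Y i‖ ^ 2)) / 2) + (-ε) * (w i * Q i) := by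
    intro i
    rw [hinner i]
    have h3 : α i * ‖∑ j, A i j • (Y j - Y i)‖ ^ 2 ≤ α i * (d i * Q i) :=
      mul_le_mul_of_nonneg_left (hCS i) (hα_nonneg i)
    have h4 : α i * (d i * Q i) - Q i / 2 ≤ -ε * Q i := by
      have := hε i
      have h5 : d i * α i - 1/2 ≤ -ε := by linarith [hε i]
      have := hQ_nonneg i
      nlinarith
    have hwi := (hw_pos i).le
    have h6 : (∑ j, A i j * (‖Y j‖ ^ 2 - ‖Y i‖ ^ 2)) / 2 - Q i / 2
        + α i * ‖∑ j, A i j • (Y j - Y i)‖ ^ 2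
        ≤ (∑ j, A i j * (‖Y j‖ ^ 2 - ‖Y i‖ ^ 2)) / 2 + (-ε) * Q i := by linarith
    calc w i * ((∑ j, A i j * (‖Y j‖ ^ 2 - ‖Y i‖ ^ 2)) / 2 - Q i / 2
        + α i * ‖∑ j, A i j • (Y j - Y i)‖ ^ 2)
        ≤ w i * ((∑ j, A i j * (‖Y j‖ ^ 2 - ‖Y i‖ ^ 2)) / 2 + (-ε) * Q i) := by
          exact mul_le_mul_of_nonneg_left (by linarith) hwi
      _ = w i * ((∑ j, A i j * (‖Y j‖ ^ 2 - ‖Y i‖ ^ 2)) / 2) + (-ε) * (w i * Q i) := by ring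
  calc ∑ i, w i * (⟪Y i, ∑ j, A i j • (Y j - Y i)⟫ + α i * ‖∑ j, A i j • (Y j - Y i)‖ ^ 2)
      ≤ ∑ i, (w i * ((∑ j, A i j * (‖Y j‖ ^ 2 - ‖Y i‖ ^ 2)) / 2) + (-ε) * (w i * Q i)) :=
        Finset.sum_le_sum fun i _ => hmain i
    _ = -ε * ∑ i, w i * Q i := by
        rw [Finset.sum_add_distrib, hbal, zero_add, Finset.mul_sum]


/-- Theorem 1, statement (1): for IFP(α_i) agents diffusively coupled over a
strongly connected graph with `d_i⁺[A]·α_i < 1/2`, the outputs are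
`L²`-synchronized: `∫_0^∞ ‖y_j - y_i‖² < ∞` for all `i, j`. -/
theorem output_L2_synchronization
    (N m : ℕ) (A : Fin N → Fin N → ℝ)
    (hA_nonneg : ∀ i j, 0 ≤ A i j)
    (hA_diag : ∀ i, A i i = 0)
    (hconn : ∀ i j : Fin N, i ≠ j → Relation.TransGen (fun a b => 0 < A a b) i j)
    (α : Fin N → ℝ)
    (hα_nonneg : ∀ i, 0 ≤ α i)
    (hα_deg : ∀ i, (∑ j, A i j) * α i < 1 / 2)
    (y : Fin N → ℝ → EuclideanSpace ℝ (Fin m))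
    (hy_cont : ∀ i, Continuous (y i))
    (u : Fin N → ℝ → EuclideanSpace ℝ (Fin m))
    (hu : ∀ i t, u i t = ∑ j, A i j • (y j t - y i t))
    (V : Fin N → ℝ → ℝ)
    (hV_nonneg : ∀ i t, 0 ≤ t → 0 ≤ V i t)
    (hdiss : ∀ i, ∀ T, 0 ≤ T →
      V i T - V i 0 ≤
        ∫ t in (0 : ℝ)..T, (⟪y i t, u i t⟫ + α i * ‖u i t‖ ^ 2)) :
    ∀ i j, IntegrableOn (fun t => ‖y j t - y i t‖ ^ 2) (Set.Ici (0 : ℝ)) := by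
  intro i j
  rcases eq_or_ne i j with rfl | hij
  · have h0 : (fun t => ‖y i t - y i t‖ ^ 2) = fun _ => (0:ℝ) := by
      funext t; simp
    rw [h0]
    exact integrableOn_zero
  have hN : 0 < N := i.pos
  haveI : Nonempty (Fin N) := ⟨i⟩
  obtain ⟨w, hw_pos, hw⟩ := exists_perron N hN A hA_nonneg hA_diag hconn
  set ε : ℝ := Finset.univ.inf' univ_nonempty (fun k => 1/2 - (∑ j, A k j) * α k) with hεdef
  have hε_pos : 0 < ε := by
    rw [hεdef, Finset.lt_inf'_iff]
    exact fun k _ => by have := hα_deg k; linarith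
  have hε_le : ∀ k, ε ≤ 1/2 - (∑ j, A k j) * α k :=
    fun k => Finset.inf'_le _ (mem_univ k)
  -- continuity
  have hu_cont : ∀ k, Continuous (u k) := by
    intro k
    have : u k = fun t => ∑ j, A k j • (y j t - y k t) := funext fun t => hu k t
    rw [this]
    exact continuous_finset_sum _ fun j _ => by fun_prop
  set F : ℝ → ℝ := fun t => ∑ k, w k * ∑ j, A k j * ‖y j t - y k t‖ ^ 2 with hFdef
  have hF_cont : Continuous F := by
    refine continuous_finset_sum _ fun k _ => Continuous.mul continuous_const ?_
    exact continuous_finset_sum _ fun j _ =>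
      Continuous.mul continuous_const (((hy_cont j).sub (hy_cont k)).norm.pow 2)
  have hF_nonneg : ∀ t, 0 ≤ F t := fun t =>
    Finset.sum_nonneg fun k _ => mul_nonneg (hw_pos k).le
      (Finset.sum_nonneg fun l _ => mul_nonneg (hA_nonneg k l) (sq_nonneg _))
  set G : ℝ → ℝ := fun t => ∑ k, w k * (⟪y k t, u k t⟫ + α k * ‖u k t‖ ^ 2) with hGdef
  have hint_cont : ∀ k, Continuous (fun t => ⟪y k t, u k t⟫ + α k * ‖u k t‖ ^ 2) :=
    fun k => ((hy_cont k).inner (hu_cont k)).add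
      (continuous_const.mul ((hu_cont k).norm.pow 2))
  have hG_cont : Continuous G :=
    continuous_finset_sum _ fun k _ => continuous_const.mul (hint_cont k)
  have hGF : ∀ t, G t ≤ -ε * F t := by
    intro t
    have hpb := pointwise_bound A hA_nonneg α w hα_nonneg hw_pos hw ε hε_le (fun k => y k t)
    simp only [hGdef, hFdef, hu]
    exact hpb
  -- integral bound
  have key : ∀ T, 0 ≤ T → ∫ t in (0:ℝ)..T, F t ≤ (∑ k, w k * V k 0) / ε := by
    intro T hT
    have hGint : IntervalIntegrable G volume 0 T := hG_cont.intervalIntegrable _ _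
    have hFint : IntervalIntegrable F volume 0 T := hF_cont.intervalIntegrable _ _
    have h1 : ∑ k, w k * (V k T - V k 0) ≤ ∫ t in (0:ℝ)..T, G t := by
      have hsplit : ∫ t in (0:ℝ)..T, G t
          = ∑ k, w k * ∫ t in (0:ℝ)..T, (⟪y k t, u k t⟫ + α k * ‖u k t‖ ^ 2) := by
        simp only [hGdef]
        rw [intervalIntegral.integral_finset_sum (f := fun k t => w k * (⟪y k t, u k t⟫ + α k * ‖u k t‖ ^ 2))
          (fun k _ => ((continuous_const.mul (hint_cont k)).intervalIntegrable _ _))]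
        exact Finset.sum_congr rfl fun k _ => intervalIntegral.integral_const_mul _ _
      rw [hsplit]
      exact Finset.sum_le_sum fun k _ =>
        mul_le_mul_of_nonneg_left (hdiss k T hT) (hw_pos k).le
    have h2 : ∫ t in (0:ℝ)..T, G t ≤ ∫ t in (0:ℝ)..T, (-ε * F t) := by
      refine intervalIntegral.integral_mono_on hT hGint (hFint.const_mul _) fun t _ => hGF t
    have h3 : ∫ t in (0:ℝ)..T, (-ε * F t) = -ε * ∫ t in (0:ℝ)..T, F t :=
      intervalIntegral.integral_const_mul _ _
    have h4 : (0:ℝ) ≤ ∑ k, w k * V k T :=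
      Finset.sum_nonneg fun k _ => mul_nonneg (hw_pos k).le (hV_nonneg k T hT)
    have h5 : ∑ k, w k * (V k T - V k 0) = (∑ k, w k * V k T) - ∑ k, w k * V k 0 := by
      rw [← Finset.sum_sub_distrib]
      exact Finset.sum_congr rfl fun k _ => by ring
    rw [le_div_iff₀ hε_pos]
    rw [h3] at h2
    rw [h5] at h1
    nlinarith [h1, h2, h4]
  -- F is integrable on (0, ∞)
  have hFIoi : IntegrableOn F (Set.Ioi (0:ℝ)) := by
    refine integrableOn_Ioi_of_intervalIntegral_norm_bounded
      ((∑ k, w k * V k 0) / ε) (0:ℝ) (b := fun n : ℕ => (n:ℝ))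
      (fun n => hF_cont.integrableOn_Ioc) tendsto_natCast_atTop_atTop ?_
    filter_upwards with n
    have : ∫ t in (0:ℝ)..(n:ℝ), ‖F t‖ = ∫ t in (0:ℝ)..(n:ℝ), F t :=
      intervalIntegral.integral_congr fun t _ => Real.norm_of_nonneg (hF_nonneg t)
    rw [this]
    exact key _ (Nat.cast_nonneg n)
  have hFIci : IntegrableOn F (Set.Ici (0:ℝ)) :=
    (integrableOn_Ici_iff_integrableOn_Ioi (f := F) (b := 0) (μ := volume)).mpr hFIoi
  -- each edge is L²
  have hedge : ∀ a b : Fin N, 0 < A a b →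
      IntegrableOn (fun t => ‖y b t - y a t‖ ^ 2) (Set.Ici (0:ℝ)) := by
    intro a b hab
    have hc : 0 < w a * A a b := mul_pos (hw_pos a) hab
    refine Integrable.mono' (hFIci.const_mul (1/(w a * A a b)))
      (((((hy_cont b).sub (hy_cont a)).norm.pow 2)).aestronglyMeasurable) ?_
    filter_upwards with t
    rw [Real.norm_of_nonneg (sq_nonneg _)]
    have e1 : A a b * ‖y b t - y a t‖ ^ 2 ≤ ∑ l, A a l * ‖y l t - y a t‖ ^ 2 :=
      Finset.single_le_sum (f := fun l => A a l * ‖y l t - y a t‖ ^ 2)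
        (fun l _ => mul_nonneg (hA_nonneg a l) (sq_nonneg _)) (mem_univ b)
    have e2 : w a * ∑ l, A a l * ‖y l t - y a t‖ ^ 2 ≤ F t :=
      Finset.single_le_sum (f := fun k => w k * ∑ l, A k l * ‖y l t - y k t‖ ^ 2)
        (fun k _ => mul_nonneg (hw_pos k).le
          (Finset.sum_nonneg fun l _ => mul_nonneg (hA_nonneg k l) (sq_nonneg _)))
        (mem_univ a)
    have h6 : ‖y b t - y a t‖ ^ 2 * (w a * A a b) ≤ F t := by
      have := mul_le_mul_of_nonneg_left e1 (hw_pos a).le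
      nlinarith
    rw [one_div, inv_mul_eq_div]
    exact (le_div_iff₀ hc).mpr h6
  -- transitive closure
  have htrans : ∀ a b : Fin N, Relation.TransGen (fun p q => 0 < A p q) a b →
      IntegrableOn (fun t => ‖y b t - y a t‖ ^ 2) (Set.Ici (0:ℝ)) := by
    intro a b h
    induction h with
    | single hab => exact hedge _ _ hab
    | @tail b c hpath hbc ih =>
        refine Integrable.mono' (((hedge _ _ hbc).add ih).const_mul 2)
          (((((hy_cont c).sub (hy_cont a)).norm.pow 2)).aestronglyMeasurable) ?_
        filter_upwards with t
        rw [Real.norm_of_nonneg (sq_nonneg _)]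
        simp only [Pi.add_apply]
        have tri : ‖y c t - y a t‖ ≤ ‖y c t - y b t‖ + ‖y b t - y a t‖ :=
          norm_sub_le_norm_sub_add_norm_sub _ _ _
        nlinarith [sq_nonneg (‖y c t - y b t‖ - ‖y b t - y a t‖), tri,
          norm_nonneg (y c t - y b t), norm_nonneg (y b t - y a t),
          norm_nonneg (y c t - y a t)]
  exact htrans i j (hconn i j hij)
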